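/- If g is an even positive integer, then there are exactly 2 gapsets of genus g all of whose Kunz coordinates lie in [g/2, g+1]: the one with Kunz coordinates (g/2, g/2) (multiplicity 3) and the one with Kunz coordinates (g) (multiplicity 2). -/

import Mathlib

def IsGapset (G : Finset ℕ) : Prop :=
  0 ∉ G ∧ ∀ z ∈ G, ∀ x y : ℕ, 0 < x → 0 < y → x + y = z → x ∈ G ∨ y ∈ G

def IsNumSgp (S : Set ℕ) : Prop :=
  0 ∈ S ∧ (∀ a ∈ S, ∀ b ∈ S, a + b ∈ S) ∧ Sᶜ.Finite

noncomputable def mult (G : Finset ℕ) : ℕ := sInf {s : ℕ | 0 < s ∧ s ∉ G}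

noncomputable def kunz (G : Finset ℕ) (i : ℕ) : ℕ := (G.filter (fun z => z % mult G = i)).card

noncomputable def gapConductor (G : Finset ℕ) : ℕ := sInf {s : ℕ | 0 < s ∧ ∀ n : ℕ, s + n ∉ G}

noncomputable def gapDepth (G : Finset ℕ) : ℕ := (gapConductor G + mult G - 1) / mult G

def KunzIneq (m : ℕ) (k : ℕ → ℕ) : Prop :=
  (∀ i j : ℕ, 1 ≤ i → i ≤ j → j ≤ m - 1 → i + j < m → k (i + j) ≤ k i + k j) ∧
  (∀ i j : ℕ, 1 ≤ i → i ≤ j → j ≤ m - 1 → m < i + j → k (i + j - m) ≤ k i + k j + 1)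



lemma mult_spec (G : Finset ℕ) : 0 < mult G ∧ mult G ∉ G := by
  have hne : {s : ℕ | 0 < s ∧ s ∉ G}.Nonempty := by
    refine ⟨(G.sup id) + 1, Nat.succ_pos _, fun h => ?_⟩
    have := Finset.le_sup (f := id) h
    simp only [id] at this
    omega
  exact Nat.sInf_mem hne

lemma mem_of_lt_mult {G : Finset ℕ} {s : ℕ} (hs : 0 < s) (h : s < mult G) : s ∈ G := by
  by_contra hn
  have : mult G ≤ s := Nat.sInf_le (show s ∈ {s : ℕ | 0 < s ∧ s ∉ G} from ⟨hs, hn⟩)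
  omega

lemma sub_mult_mem {G : Finset ℕ} (hG : IsGapset G) {z : ℕ} (hz : z ∈ G)
    (h : mult G < z) : z - mult G ∈ G := by
  rcases hG.2 z hz (mult G) (z - mult G) (mult_spec G).1 (by omega) (by omega) with h1 | h1
  · exact absurd h1 (mult_spec G).2
  · exact h1

lemma add_mul_mem_of_le {G : Finset ℕ} (hG : IsGapset G) {i : ℕ} (hi : 0 < i) :
    ∀ t, i + mult G * t ∈ G → ∀ t', t' ≤ t → i + mult G * t' ∈ G := by
  intro t
  induction t with
  | zero =>
    intro h t' ht'
    have : t' = 0 := by omega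
    subst this
    exact h
  | succ n ih =>
    intro h t' ht'
    rcases Nat.eq_or_lt_of_le ht' with rfl | hlt
    · exact h
    · have hm := (mult_spec G).1
      have hstep : i + mult G * n ∈ G := by
        have := sub_mult_mem hG h (by nlinarith)
        have he : i + mult G * (n + 1) - mult G = i + mult G * n := by ring_nf; omega
        rwa [he] at this
      exact ih hstep t' (by omega)

lemma mul_not_mem {G : Finset ℕ} (hG : IsGapset G) : ∀ t, mult G * t ∉ G := by
  intro t
  induction t with
  | zero => simpa using hG.1
  | succ n ih =>
    intro h
    rcases Nat.eq_zero_or_pos n with rfl | hn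
    · exact (mult_spec G).2 (by simpa using h)
    · have hm := (mult_spec G).1
      have := sub_mult_mem hG h (by nlinarith)
      have he : mult G * (n + 1) - mult G = mult G * n := by ring_nf; omega
      rw [he] at this
      exact ih this

lemma downclosed_eq_range (s : Finset ℕ) (h : ∀ a ∈ s, ∀ b, b ≤ a → b ∈ s) :
    s = Finset.range s.card := by
  have hsub : s ⊆ Finset.range s.card := by
    intro a ha
    have : Finset.range (a + 1) ⊆ s := by
      intro b hb
      exact h a ha b (by simpa using Nat.lt_succ_iff.mp (Finset.mem_range.mp hb))
    have := Finset.card_le_card this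
    simp at this
    simpa using this
  exact Finset.eq_of_subset_of_card_le hsub (by simp)

lemma mem_iff_lt_kunz {G : Finset ℕ} (hG : IsGapset G) {i : ℕ} (hi : 0 < i)
    (him : i < mult G) (t : ℕ) : i + mult G * t ∈ G ↔ t < kunz G i := by
  set m := mult G with hm
  have hm0 : 0 < m := (mult_spec G).1
  set Gi := G.filter (fun z => z % m = i) with hGi
  have hrec : ∀ z ∈ Gi, z = i + m * (z / m) := by
    intro z hz
    have h1 := (Finset.mem_filter.mp hz).2
    have h2 := Nat.div_add_mod z m
    omega
  set T := Gi.image (· / m) with hT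
  have hcard : T.card = kunz G i := by
    rw [hT]
    apply Finset.card_image_of_injOn
    intro a ha b hb hab
    rw [hrec a (Finset.mem_coe.mp ha), hrec b (Finset.mem_coe.mp hb)]
    exact congrArg (fun x => i + m * x) hab
  have hmemT : ∀ t', t' ∈ T ↔ i + m * t' ∈ G := by
    intro t'
    constructor
    · intro ht'
      obtain ⟨z, hz, hzt⟩ := Finset.mem_image.mp ht'
      have := hrec z hz
      rw [← hzt, ← this]
      exact (Finset.mem_filter.mp hz).1
    · intro hmem
      have h3 : (i + m * t') / m = t' := by
        rw [Nat.add_mul_div_left _ _ hm0, Nat.div_eq_of_lt him, Nat.zero_add]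
      have h4 : (i + m * t') % m = i := by
        rw [Nat.add_mul_mod_self_left, Nat.mod_eq_of_lt him]
      exact Finset.mem_image.mpr ⟨i + m * t', Finset.mem_filter.mpr ⟨hmem, h4⟩, h3⟩
  have hdc : T = Finset.range (kunz G i) := by
    rw [← hcard]
    apply downclosed_eq_range
    intro a ha b hb
    rw [hmemT] at ha ⊢
    exact add_mul_mem_of_le hG hi a ha b hb
  rw [← hmemT, hdc, Finset.mem_range]

lemma card_eq_sum_kunz {G : Finset ℕ} (hG : IsGapset G) :
    G.card = ∑ i ∈ Finset.Ico 1 (mult G), kunz G i := by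
  have hm0 : 0 < mult G := (mult_spec G).1
  have h1 : G.card = ∑ i ∈ Finset.range (mult G), kunz G i := by
    apply Finset.card_eq_sum_card_fiberwise
    intro z hz
    exact Finset.mem_range.mpr (Nat.mod_lt _ hm0)
  have h0 : kunz G 0 = 0 := by
    rw [kunz]
    apply Finset.card_eq_zero.mpr
    apply Finset.filter_eq_empty_iff.mpr
    intro z hz hmod
    have h2 := Nat.div_add_mod z (mult G)
    have : z = mult G * (z / mult G) := by omega
    exact mul_not_mem hG (z / mult G) (this ▸ hz)
  have hins : Finset.range (mult G) = insert 0 (Finset.Ico 1 (mult G)) := by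
    ext x; simp [Finset.mem_Ico]; omega
  rw [h1, hins, Finset.sum_insert (by simp), h0, zero_add]

lemma mult_eq_of {G : Finset ℕ} {m : ℕ} (hm : 0 < m) (h2 : m ∉ G)
    (h1 : ∀ s, 0 < s → s < m → s ∈ G) : mult G = m := by
  have hle : mult G ≤ m := Nat.sInf_le (show m ∈ {s : ℕ | 0 < s ∧ s ∉ G} from ⟨hm, h2⟩)
  have hs := mult_spec G
  by_contra hne
  exact hs.2 (h1 _ hs.1 (by omega))

lemma mem_A {g z : ℕ} : z ∈ (Finset.range g).image (fun j => 2 * j + 1) ↔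
    z % 2 = 1 ∧ z < 2 * g := by
  simp only [Finset.mem_image, Finset.mem_range]
  constructor
  · rintro ⟨j, hj, rfl⟩; omega
  · rintro ⟨h1, h2⟩; exact ⟨z / 2, by omega, by omega⟩

lemma mem_B {g z : ℕ} : z ∈ ((Finset.range (g / 2)).image (fun j => 3 * j + 1)) ∪
      ((Finset.range (g / 2)).image (fun j => 3 * j + 2)) ↔
    z % 3 ≠ 0 ∧ z < 3 * (g / 2) := by
  simp only [Finset.mem_union, Finset.mem_image, Finset.mem_range]
  constructor
  · rintro (⟨j, hj, rfl⟩ | ⟨j, hj, rfl⟩) <;> omega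
  · rintro ⟨h1, h2⟩
    rcases (by omega : z % 3 = 1 ∨ z % 3 = 2) with h | h
    · exact Or.inl ⟨z / 3, by omega, by omega⟩
    · exact Or.inr ⟨z / 3, by omega, by omega⟩

lemma gapset_A {g : ℕ} : IsGapset ((Finset.range g).image (fun j => 2 * j + 1)) := by
  constructor
  · rw [mem_A]; omega
  · intro z hz x y hx hy hxy
    rw [mem_A] at hz
    rcases (by omega : x % 2 = 1 ∨ y % 2 = 1) with h | h
    · exact Or.inl (mem_A.mpr ⟨h, by omega⟩)
    · exact Or.inr (mem_A.mpr ⟨h, by omega⟩)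

lemma gapset_B {g : ℕ} : IsGapset (((Finset.range (g / 2)).image (fun j => 3 * j + 1)) ∪
    ((Finset.range (g / 2)).image (fun j => 3 * j + 2))) := by
  constructor
  · rw [mem_B]; omega
  · intro z hz x y hx hy hxy
    rw [mem_B] at hz
    rcases (by omega : x % 3 ≠ 0 ∨ y % 3 ≠ 0) with h | h
    · exact Or.inl (mem_B.mpr ⟨h, by omega⟩)
    · exact Or.inr (mem_B.mpr ⟨h, by omega⟩)

lemma card_A {g : ℕ} : ((Finset.range g).image (fun j => 2 * j + 1)).card = g := by
  rw [Finset.card_image_of_injective _ (fun a b hab => by omega), Finset.card_range]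

lemma card_B {g : ℕ} : (((Finset.range (g / 2)).image (fun j => 3 * j + 1)) ∪
    ((Finset.range (g / 2)).image (fun j => 3 * j + 2))).card = g / 2 + g / 2 := by
  rw [Finset.card_union_of_disjoint, Finset.card_image_of_injective _ (fun a b hab => by omega),
    Finset.card_image_of_injective _ (fun a b hab => by omega), Finset.card_range]
  rw [Finset.disjoint_left]
  intro z hz hz'
  simp only [Finset.mem_image, Finset.mem_range] at hz hz'
  obtain ⟨a, _, ha⟩ := hz
  obtain ⟨b, _, hb⟩ := hz'
  omega

lemma mult_A {g : ℕ} (hg : 0 < g) : mult ((Finset.range g).image (fun j => 2 * j + 1)) = 2 := by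
  apply mult_eq_of (by norm_num) (by rw [mem_A]; omega)
  intro s hs hs2
  rw [mem_A]; omega

lemma mult_B {g : ℕ} (hg : 2 ≤ g) :
    mult (((Finset.range (g / 2)).image (fun j => 3 * j + 1)) ∪
      ((Finset.range (g / 2)).image (fun j => 3 * j + 2))) = 3 := by
  apply mult_eq_of (by norm_num) (by rw [mem_B]; omega)
  intro s hs hs2
  rw [mem_B]; omega

lemma kunz_A1 {g : ℕ} (hg : 0 < g) :
    kunz ((Finset.range g).image (fun j => 2 * j + 1)) 1 = g := by
  rw [kunz, mult_A hg]
  rw [Finset.filter_true_of_mem (fun z hz => (mem_A.mp hz).1), card_A]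

lemma kunz_B1 {g : ℕ} (hg : 2 ≤ g) :
    kunz (((Finset.range (g / 2)).image (fun j => 3 * j + 1)) ∪
      ((Finset.range (g / 2)).image (fun j => 3 * j + 2))) 1 = g / 2 := by
  rw [kunz, mult_B hg]
  have : (((Finset.range (g / 2)).image (fun j => 3 * j + 1)) ∪
      ((Finset.range (g / 2)).image (fun j => 3 * j + 2))).filter (fun z => z % 3 = 1) =
      (Finset.range (g / 2)).image (fun j => 3 * j + 1) := by
    ext z
    simp only [Finset.mem_filter, Finset.mem_image, Finset.mem_range]
    rw [mem_B]
    constructor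
    · rintro ⟨⟨h1, h2⟩, h3⟩; exact ⟨z / 3, by omega, by omega⟩
    · rintro ⟨j, hj, rfl⟩; omega
  rw [this, Finset.card_image_of_injective _ (fun a b hab => by omega), Finset.card_range]

lemma kunz_B2 {g : ℕ} (hg : 2 ≤ g) :
    kunz (((Finset.range (g / 2)).image (fun j => 3 * j + 1)) ∪
      ((Finset.range (g / 2)).image (fun j => 3 * j + 2))) 2 = g / 2 := by
  rw [kunz, mult_B hg]
  have : (((Finset.range (g / 2)).image (fun j => 3 * j + 1)) ∪
      ((Finset.range (g / 2)).image (fun j => 3 * j + 2))).filter (fun z => z % 3 = 2) =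
      (Finset.range (g / 2)).image (fun j => 3 * j + 2) := by
    ext z
    simp only [Finset.mem_filter, Finset.mem_image, Finset.mem_range]
    rw [mem_B]
    constructor
    · rintro ⟨⟨h1, h2⟩, h3⟩; exact ⟨z / 3, by omega, by omega⟩
    · rintro ⟨j, hj, rfl⟩; omega
  rw [this, Finset.card_image_of_injective _ (fun a b hab => by omega), Finset.card_range]

theorem gapsets_level_half_genus (g : ℕ) (hg : 0 < g) (he : Even g) :
    {G : Finset ℕ | IsGapset G ∧ G.card = g ∧
        ∀ i : ℕ, 1 ≤ i → i < mult G → kunz G i ∈ Set.Icc (g / 2) (g + 1)} =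
      {(Finset.range g).image (fun j => 2 * j + 1),
        ((Finset.range (g / 2)).image (fun j => 3 * j + 1)) ∪
          ((Finset.range (g / 2)).image (fun j => 3 * j + 2))} ∧
      (Finset.range g).image (fun j => 2 * j + 1) ≠
        ((Finset.range (g / 2)).image (fun j => 3 * j + 1)) ∪
          ((Finset.range (g / 2)).image (fun j => 3 * j + 2)) ∧
      mult ((Finset.range g).image (fun j => 2 * j + 1)) = 2 ∧
      kunz ((Finset.range g).image (fun j => 2 * j + 1)) 1 = g ∧
      mult (((Finset.range (g / 2)).image (fun j => 3 * j + 1)) ∪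
        ((Finset.range (g / 2)).image (fun j => 3 * j + 2))) = 3 ∧
      kunz (((Finset.range (g / 2)).image (fun j => 3 * j + 1)) ∪
        ((Finset.range (g / 2)).image (fun j => 3 * j + 2))) 1 = g / 2 ∧
      kunz (((Finset.range (g / 2)).image (fun j => 3 * j + 1)) ∪
        ((Finset.range (g / 2)).image (fun j => 3 * j + 2))) 2 = g / 2 := by
  obtain ⟨r, hr⟩ := he
  have hg2 : 2 ≤ g := by omega
  refine ⟨?_, ?_, mult_A hg, kunz_A1 hg, mult_B hg2, kunz_B1 hg2, kunz_B2 hg2⟩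
  · ext G
    simp only [Set.mem_setOf_eq, Set.mem_insert_iff, Set.mem_singleton_iff]
    constructor
    · rintro ⟨hG, hcard, hk⟩
      have hsum := card_eq_sum_kunz hG
      have hm0 := (mult_spec G).1
      have hm2 : 2 ≤ mult G := by
        by_contra h
        have h1 : mult G = 1 := by omega
        rw [h1] at hsum
        simp only [Finset.Ico_self, Finset.sum_empty] at hsum
        omega
      have hm3 : mult G ≤ 3 := by
        by_contra h
        have hbd := Finset.card_nsmul_le_sum (Finset.Ico 1 (mult G)) (kunz G) (g / 2)
          (fun i hi => (Set.mem_Icc.mp (hk i (Finset.mem_Ico.mp hi).1 (Finset.mem_Ico.mp hi).2)).1)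
        rw [Nat.card_Ico, smul_eq_mul, ← hsum, hcard] at hbd
        have : 3 * (g / 2) ≤ (mult G - 1) * (g / 2) :=
          Nat.mul_le_mul_right _ (by omega)
        omega
      rcases (by omega : mult G = 2 ∨ mult G = 3) with hm | hm
      · left
        have hk1 : kunz G 1 = g := by
          rw [hm] at hsum
          have h12 : Finset.Ico 1 2 = {1} := by decide
          rw [h12, Finset.sum_singleton] at hsum
          omega
        ext z
        rw [mem_A]
        constructor
        · intro hz
          have hz2 : z % 2 ≠ 0 := by
            intro h0
            have hd := Nat.div_add_mod z 2
            have he2 : z = mult G * (z / 2) := by rw [hm]; omega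
            exact mul_not_mem hG (z / 2) (he2 ▸ hz)
          have hiff := mem_iff_lt_kunz hG (i := 1) one_pos (by omega) (z / 2)
          rw [hm, hk1] at hiff
          have hlt : z / 2 < g := hiff.mp (by
            have hz1 : 1 + 2 * (z / 2) = z := by omega
            rw [hz1]; exact hz)
          exact ⟨by omega, by omega⟩
        · rintro ⟨h1, h2⟩
          have hiff := mem_iff_lt_kunz hG (i := 1) one_pos (by omega) (z / 2)
          rw [hm, hk1] at hiff
          have hz1 : 1 + 2 * (z / 2) = z := by omega
          rw [← hz1]
          exact hiff.mpr (by omega)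
      · right
        have hks : kunz G 1 + kunz G 2 = g := by
          rw [hm] at hsum
          have h13 : Finset.Ico 1 3 = {1, 2} := by decide
          rw [h13, Finset.sum_insert (by decide), Finset.sum_singleton] at hsum
          omega
        have e1 := Set.mem_Icc.mp (hk 1 (by omega) (by omega))
        have e2 := Set.mem_Icc.mp (hk 2 (by omega) (by omega))
        have hk1 : kunz G 1 = g / 2 := by omega
        have hk2 : kunz G 2 = g / 2 := by omega
        ext z
        rw [mem_B]
        constructor
        · intro hz
          have hz3 : z % 3 ≠ 0 := by
            intro h0
            have hd := Nat.div_add_mod z 3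
            have he3 : z = mult G * (z / 3) := by rw [hm]; omega
            exact mul_not_mem hG (z / 3) (he3 ▸ hz)
          rcases (by omega : z % 3 = 1 ∨ z % 3 = 2) with h | h
          · have hiff := mem_iff_lt_kunz hG (i := 1) one_pos (by omega) (z / 3)
            rw [hm, hk1] at hiff
            have hlt : z / 3 < g / 2 := hiff.mp (by
              have hz1 : 1 + 3 * (z / 3) = z := by omega
              rw [hz1]; exact hz)
            exact ⟨by omega, by omega⟩
          · have hiff := mem_iff_lt_kunz hG (i := 2) (by norm_num) (by omega) (z / 3)
            rw [hm, hk2] at hiff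
            have hlt : z / 3 < g / 2 := hiff.mp (by
              have hz1 : 2 + 3 * (z / 3) = z := by omega
              rw [hz1]; exact hz)
            exact ⟨by omega, by omega⟩
        · rintro ⟨h1, h2⟩
          rcases (by omega : z % 3 = 1 ∨ z % 3 = 2) with h | h
          · have hiff := mem_iff_lt_kunz hG (i := 1) one_pos (by omega) (z / 3)
            rw [hm, hk1] at hiff
            have hz1 : 1 + 3 * (z / 3) = z := by omega
            rw [← hz1]
            exact hiff.mpr (by omega)
          · have hiff := mem_iff_lt_kunz hG (i := 2) (by norm_num) (by omega) (z / 3)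
            rw [hm, hk2] at hiff
            have hz1 : 2 + 3 * (z / 3) = z := by omega
            rw [← hz1]
            exact hiff.mpr (by omega)
    · rintro (rfl | rfl)
      · refine ⟨gapset_A, card_A, fun i hi1 hi2 => ?_⟩
        rw [mult_A hg] at hi2
        have : i = 1 := by omega
        subst this
        rw [kunz_A1 hg, Set.mem_Icc]
        omega
      · refine ⟨gapset_B, by rw [card_B]; omega, fun i hi1 hi2 => ?_⟩
        rw [mult_B hg2] at hi2
        rcases (by omega : i = 1 ∨ i = 2) with rfl | rfl
        · rw [kunz_B1 hg2, Set.mem_Icc]; omega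
        · rw [kunz_B2 hg2, Set.mem_Icc]; omega
  · intro hAB
    have h2B : (2 : ℕ) ∈ ((Finset.range (g / 2)).image (fun j => 3 * j + 1)) ∪
        ((Finset.range (g / 2)).image (fun j => 3 * j + 2)) := mem_B.mpr ⟨by omega, by omega⟩
    rw [← hAB] at h2B
    exact absurd (mem_A.mp h2B).1 (by omega)
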